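/- Let G be a simple graph and k a nonnegative integer. Let C and C' be cliques of G of size at least k, contained in maximal cliques M and M' respectively. If there is a path from M to M' in the graph whose vertices are the maximal cliques of G and where two maximal cliques M_1, M_2 are adjacent when |M_1 ∩ M_2| ≥ k, then there exists a TAR(k)-sequence from C to C' in G. -/

import Mathlib

variable {V : Type*} [DecidableEq V]

/-- One TAR step: add or remove a single vertex. -/
def TARStep (C C' : Finset V) : Prop :=
  (∃ v ∉ C, C' = insert v C) ∨ (∃ v ∈ C, C' = C.erase v)

/-- A TAR(k)-sequence of cliques of `G` of length `ℓ`, given by `f` on indices `0..ℓ`. -/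
def TARSeq (G : SimpleGraph V) (k ℓ : ℕ) (f : ℕ → Finset V) : Prop :=
  (∀ i ≤ ℓ, G.IsClique (f i : Set V) ∧ k ≤ (f i).card) ∧
  ∀ i < ℓ, TARStep (f i) (f (i + 1))

/-- A maximal clique of `G`. -/
def IsMaximalClique (G : SimpleGraph V) (M : Finset V) : Prop :=
  G.IsClique (M : Set V) ∧
    ∀ D : Finset V, G.IsClique (D : Set V) → M ⊆ D → M = D

/-- The `k`-intersection maximal-clique graph: vertices are the maximal cliques of `G`,
two distinct maximal cliques being adjacent when their intersection has at least `k` vertices. -/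
def MCGraph (G : SimpleGraph V) (k : ℕ) :
    SimpleGraph {M : Finset V // IsMaximalClique G M} where
  Adj M M' := M ≠ M' ∧ k ≤ (M.1 ∩ M'.1).card
  symm := by
    constructor
    intro M M' h
    exact ⟨h.1.symm, by rw [Finset.inter_comm]; exact h.2⟩
  loopless := by constructor; intro M h; exact h.1 rfl

lemma tarStep_symm {C C' : Finset V} (h : TARStep C C') : TARStep C' C := by
  rcases h with ⟨v, hv, rfl⟩ | ⟨v, hv, rfl⟩
  · exact Or.inr ⟨v, Finset.mem_insert_self v C, by rw [Finset.erase_insert hv]⟩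
  · exact Or.inl ⟨v, Finset.notMem_erase v C, by rw [Finset.insert_erase hv]⟩

lemma tarSeq_reverse {G : SimpleGraph V} {k ℓ : ℕ} {f : ℕ → Finset V} (h : TARSeq G k ℓ f) :
    TARSeq G k ℓ (fun i => f (ℓ - i)) := by
  refine ⟨fun i _ => h.1 _ (Nat.sub_le _ _), fun i hi => ?_⟩
  have e : ℓ - i = (ℓ - (i + 1)) + 1 := by omega
  simp only [e]
  exact tarStep_symm (h.2 _ (by omega))

lemma tarSeq_concat {G : SimpleGraph V} {k ℓ₁ ℓ₂ : ℕ} {f g : ℕ → Finset V}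
    (hf : TARSeq G k ℓ₁ f) (hg : TARSeq G k ℓ₂ g) (hfg : f ℓ₁ = g 0) :
    TARSeq G k (ℓ₁ + ℓ₂) (fun i => if i ≤ ℓ₁ then f i else g (i - ℓ₁)) := by
  constructor
  · intro i hi
    by_cases h : i ≤ ℓ₁
    · simpa [h] using hf.1 i h
    · simpa [h] using hg.1 (i - ℓ₁) (by omega)
  · intro i hi
    by_cases h1 : i + 1 ≤ ℓ₁
    · simpa [h1, (by omega : i ≤ ℓ₁)] using hf.2 i (by omega)
    · by_cases h2 : i ≤ ℓ₁
      · have : i = ℓ₁ := by omega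
        subst this
        simpa [h1, h2, hfg] using hg.2 0 (by omega)
      · have e : i + 1 - ℓ₁ = (i - ℓ₁) + 1 := by omega
        simp only [if_neg h2, if_neg h1, e]
        exact hg.2 (i - ℓ₁) (by omega)

lemma tar_up (G : SimpleGraph V) (k : ℕ) :
    ∀ n (C D : Finset V), (D \ C).card = n → G.IsClique (D : Set V) → C ⊆ D → k ≤ C.card →
    ∃ ℓ f, TARSeq G k ℓ f ∧ f 0 = C ∧ f ℓ = D := by
  intro n
  induction n with
  | zero =>
    intro C D hn hD hsub hk
    have : C = D := Finset.Subset.antisymm hsub (by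
      intro x hx
      by_contra hx'
      have : x ∈ D \ C := Finset.mem_sdiff.mpr ⟨hx, hx'⟩
      simp [Finset.card_eq_zero.mp hn] at this)
    subst this
    exact ⟨0, fun _ => C, ⟨fun i _ => ⟨hD, hk⟩, fun i hi => by omega⟩, rfl, rfl⟩
  | succ n ih =>
    intro C D hn hD hsub hk
    have hne : (D \ C).Nonempty := Finset.card_pos.mp (by omega)
    obtain ⟨v, hv⟩ := hne
    rw [Finset.mem_sdiff] at hv
    have hsub1 : insert v C ⊆ D := Finset.insert_subset hv.1 hsub
    have hcard : (D \ insert v C).card = n := by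
      rw [Finset.sdiff_insert]
      rw [Finset.card_erase_of_mem (Finset.mem_sdiff.mpr hv)]
      omega
    obtain ⟨ℓ, f, hseq, h0, hl⟩ := ih (insert v C) D hcard hD hsub1
      (le_trans hk (Finset.card_le_card (Finset.subset_insert v C)))
    refine ⟨ℓ + 1, fun i => if i = 0 then C else f (i - 1), ?_, by simp, by simp [hl]⟩
    constructor
    · intro i hi
      by_cases h : i = 0
      · simpa [h] using ⟨hD.subset (Finset.coe_subset.mpr hsub), hk⟩
      · simpa [h] using hseq.1 (i - 1) (by omega)
    · intro i hi
      by_cases h : i = 0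
      · subst h
        simp only [if_pos rfl, if_neg one_ne_zero]
        simp only [Nat.sub_self, h0]
        exact Or.inl ⟨v, hv.2, rfl⟩
      · have e : i + 1 - 1 = (i - 1) + 1 := by omega
        simpa [h, e] using hseq.2 (i - 1) (by omega)

lemma tar_within (G : SimpleGraph V) (k : ℕ) (C C' D : Finset V)
    (hD : G.IsClique (D : Set V)) (h1 : C ⊆ D) (h2 : C' ⊆ D)
    (hk : k ≤ C.card) (hk' : k ≤ C'.card) :
    ∃ ℓ f, TARSeq G k ℓ f ∧ f 0 = C ∧ f ℓ = C' := by
  obtain ⟨ℓ₁, f, hf, hf0, hfl⟩ := tar_up G k _ C D rfl hD h1 hk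
  obtain ⟨ℓ₂, g, hg, hg0, hgl⟩ := tar_up G k _ C' D rfl hD h2 hk'
  have hg' := tarSeq_reverse hg
  refine ⟨ℓ₁ + ℓ₂, _, tarSeq_concat hf hg' (by simp [hfl, hgl]), by simp [hf0], ?_⟩
  by_cases h : ℓ₂ = 0
  · subst h; simp [hfl, hgl.symm.trans hg0]
  · have hne : ¬ ℓ₁ + ℓ₂ ≤ ℓ₁ := by omega
    have e : ℓ₂ - (ℓ₁ + ℓ₂ - ℓ₁) = 0 := by omega
    simp only [if_neg hne, e, hg0]

theorem stmt10 (G : SimpleGraph V) (k : ℕ) (C C' : Finset V)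
    (hC : G.IsClique (C : Set V)) (hC' : G.IsClique (C' : Set V))
    (hkC : k ≤ C.card) (hkC' : k ≤ C'.card)
    (M M' : {M : Finset V // IsMaximalClique G M})
    (hM : C ⊆ M.1) (hM' : C' ⊆ M'.1)
    (hreach : (MCGraph G k).Reachable M M') :
    ∃ (ℓ : ℕ) (f : ℕ → Finset V), TARSeq G k ℓ f ∧ f 0 = C ∧ f ℓ = C' := by
  obtain ⟨w⟩ := hreach
  clear hC'
  induction w generalizing C hC hkC with
  | nil =>
    rename_i u
    exact tar_within G k C C' u.1 u.2.1 hM hM' hkC hkC'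
  | cons h p ih =>
    rename_i u v w'
    obtain ⟨ℓ₁, f, hf, hf0, hfl⟩ := tar_within G k C (u.1 ∩ v.1) u.1 u.2.1 hM
      Finset.inter_subset_left hkC h.2
    obtain ⟨ℓ₂, g, hg, hg0, hgl⟩ := ih (u.1 ∩ v.1)
      (u.2.1.subset (Finset.coe_subset.mpr Finset.inter_subset_left)) h.2
      Finset.inter_subset_right hM'
    refine ⟨ℓ₁ + ℓ₂, _, tarSeq_concat hf hg (by simp [hfl, hg0]), by simp [hf0], ?_⟩
    by_cases hz : ℓ₂ = 0
    · subst hz; simp [hfl, hgl.symm.trans hg0]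
    · have hne : ¬ ℓ₁ + ℓ₂ ≤ ℓ₁ := by omega
      have e : ℓ₁ + ℓ₂ - ℓ₁ = ℓ₂ := by omega
      simp only [if_neg hne, e, hgl]
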